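/- Let Z be Hermitian positive definite, w ≠ 0, and for u with u* w ≠ 0 define SINR(u) = (ρ α'² |u* w|²)/(ρ α² |u* w|² + u* Z u), with ρ, α, α' > 0. Then the supremum of SINR(u) over such u equals ρ α'² / (ρ α² + (w* Z⁻¹ w)⁻¹). -/

import Mathlib

open Matrix ComplexOrder

/-- The Cauchy–Schwarz inequality for the inner product induced by a positive
definite matrix. -/
lemma posDef_cauchy_schwarz {N : ℕ} {Z : Matrix (Fin N) (Fin N) ℂ} (hZ : Z.PosDef)
    (u v : Fin N → ℂ) :
    ‖star u ⬝ᵥ Z *ᵥ v‖ ^ 2 ≤ (star u ⬝ᵥ Z *ᵥ u).re * (star v ⬝ᵥ Z *ᵥ v).re := by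
  letI c : PreInnerProductSpace.Core ℂ (Fin N → ℂ) :=
    { inner := fun x y => star x ⬝ᵥ Z *ᵥ y
      conj_inner_symm := fun x y => by
        rw [star_dotProduct, starRingEnd_apply, star_star, star_mulVec, dotProduct_mulVec,
          hZ.isHermitian.eq]
      re_inner_nonneg := fun x => by
        by_cases h : x = 0
        · simp [h]
        · exact le_of_lt (hZ.re_dotProduct_pos h)
      add_left := by simp [star_add, add_dotProduct]
      smul_left := fun x y r => by
        rw [← smul_eq_mul, ← smul_dotProduct, starRingEnd_apply, ← star_smul] }
  have h : ‖star u ⬝ᵥ Z *ᵥ v‖ * ‖star v ⬝ᵥ Z *ᵥ u‖ ≤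
      RCLike.re (star u ⬝ᵥ Z *ᵥ u) * RCLike.re (star v ⬝ᵥ Z *ᵥ v) :=
    InnerProductSpace.Core.inner_mul_inner_self_le (𝕜 := ℂ) (F := Fin N → ℂ) u v
  simp only [RCLike.re_to_complex] at h
  have e : star v ⬝ᵥ Z *ᵥ u = star (star u ⬝ᵥ Z *ᵥ v) := by
    rw [star_dotProduct, star_mulVec, hZ.isHermitian.eq, dotProduct_mulVec]
  have hsymm : ‖star v ⬝ᵥ Z *ᵥ u‖ = ‖star u ⬝ᵥ Z *ᵥ v‖ := by
    rw [e]; exact norm_star _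
  rw [hsymm, ← sq] at h
  exact h

/-- For Hermitian positive definite `Z`, nonzero `w`, and
`SINR(u) = ρα'²|u* w|²/(ρα²|u* w|² + u* Z u)` over `u` with `u* w ≠ 0`,
the supremum (in fact maximum) equals `ρα'²/(ρα² + (w* Z⁻¹ w)⁻¹)`. -/
theorem stmt8 (N : ℕ) (Z : Matrix (Fin N) (Fin N) ℂ) (hZ : Z.PosDef)
    (w : Fin N → ℂ) (hw : w ≠ 0) (ρ α α' : ℝ) (hρ : 0 < ρ) (hα : 0 < α) (hα' : 0 < α') :
    IsGreatest {r : ℝ | ∃ u : Fin N → ℂ, star u ⬝ᵥ w ≠ 0 ∧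
        r = ρ * α' ^ 2 * ‖star u ⬝ᵥ w‖ ^ 2 /
              (ρ * α ^ 2 * ‖star u ⬝ᵥ w‖ ^ 2 + (star u ⬝ᵥ Z *ᵥ u).re)}
      (ρ * α' ^ 2 / (ρ * α ^ 2 + ((star w ⬝ᵥ Z⁻¹ *ᵥ w).re)⁻¹)) := by
  have hdet : IsUnit Z.det := hZ.det_pos.ne'.isUnit
  set v : Fin N → ℂ := Z⁻¹ *ᵥ w with hv
  have hvne : v ≠ 0 := by
    intro h
    apply hw
    have := congrArg (Z *ᵥ ·) h
    simpa [hv, mulVec_mulVec, Matrix.mul_nonsing_inv _ hdet, mulVec_zero] using this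
  have hZv : Z *ᵥ v = w := by
    rw [hv, mulVec_mulVec, Matrix.mul_nonsing_inv _ hdet, one_mulVec]
  -- w* Z⁻¹ w = v* Z v
  have hkey : star w ⬝ᵥ Z⁻¹ *ᵥ w = star v ⬝ᵥ Z *ᵥ v := by
    conv_lhs => rw [← hZv]
    rw [star_mulVec, hZ.isHermitian.eq, ← dotProduct_mulVec, mulVec_mulVec,
      Matrix.mul_nonsing_inv _ hdet, one_mulVec, hv]
  set c : ℝ := (star w ⬝ᵥ Z⁻¹ *ᵥ w).re with hc
  have hpos : (0 : ℂ) < star v ⬝ᵥ Z *ᵥ v := hZ.dotProduct_mulVec_pos hvne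
  rw [Complex.lt_def] at hpos
  have hcpos : 0 < c := by
    rw [hc, hkey]
    simpa using hpos.1
  have hreal : star v ⬝ᵥ Z *ᵥ v = (c : ℂ) := by
    rw [hc, hkey]
    have him : (star v ⬝ᵥ Z *ᵥ v).im = 0 := by simpa using hpos.2.symm
    exact Complex.ext (by simp) (by simp [him])
  have hc0 : c ≠ 0 := ne_of_gt hcpos
  have hcinv : 0 < c⁻¹ := inv_pos.mpr hcpos
  constructor
  · -- membership: take u = v
    refine ⟨v, ?_, ?_⟩
    · rw [← hZv, hreal]
      simpa using hc0
    · rw [← hZv, hreal, Complex.ofReal_re]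
      have hnc : ‖(c : ℂ)‖ = c := by
        rw [Complex.norm_real, Real.norm_of_nonneg hcpos.le]
      rw [hnc]
      have hden : 0 < ρ * α ^ 2 + c⁻¹ := by
        have : 0 < ρ * α ^ 2 := by positivity
        linarith
      have hden' : 0 < ρ * α ^ 2 * c ^ 2 + c := by
        have := mul_pos (mul_pos hρ (pow_pos hα 2)) (pow_pos hcpos 2)
        nlinarith
      field_simp
  · -- upper bound
    rintro r ⟨u, hu, rfl⟩
    set a : ℝ := ‖star u ⬝ᵥ w‖ ^ 2 with ha
    have hapos : 0 < a := pow_pos (norm_pos_iff.mpr hu) 2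
    set b : ℝ := (star u ⬝ᵥ Z *ᵥ u).re with hb
    have hune : u ≠ 0 := by
      intro h; apply hu; simp [h]
    have hbpos : 0 < b := hZ.re_dotProduct_pos hune
    have hcs : a ≤ b * c := by
      have h := posDef_cauchy_schwarz hZ u v
      rw [show star u ⬝ᵥ Z *ᵥ v = star u ⬝ᵥ w from by rw [hZv]] at h
      rw [ha, hb, hc, hkey]
      exact h
    have hden1 : 0 < ρ * α ^ 2 * a + b := by positivity
    have hden2 : 0 < ρ * α ^ 2 + c⁻¹ := by
      have : 0 < ρ * α ^ 2 := by positivity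
      linarith
    rw [div_le_div_iff₀ hden1 hden2]
    have h1 : a * c⁻¹ ≤ b := by
      rw [← div_eq_mul_inv, div_le_iff₀ hcpos]
      linarith
    have h2 : ρ * α' ^ 2 * (a * c⁻¹) ≤ ρ * α' ^ 2 * b :=
      mul_le_mul_of_nonneg_left h1 (by positivity)
    nlinarith [h2]
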